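/- If the minimal DFA of a regular language L contains two distinguishable states q₁ ≠ q₂ and nonempty strings x, y with δ(q₁,x) = δ(q₂,x) = q₂ and δ(q₂,y) = q₁ (i.e., L violates the partial order condition), then, assuming RMM is closed under inverse homomorphisms and left/right quotients and that {a,b}*b ∉ RMM, L is not accepted by any measure-many QFA with bounded error. -/

import Mathlib

/-- Extended transition function of a DFA. -/
def dfaEval {Q A : Type} (δ : Q → A → Q) (q : Q) (w : List A) : Q :=
  w.foldl δ q

/-- Two states are distinguishable if some string sends exactly one of them into `F`. -/
def Disting {Q A : Type} (δ : Q → A → Q) (F : Set Q) (q1 q2 : Q) : Prop :=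
  ∃ z : List A, ¬ (dfaEval δ q1 z ∈ F ↔ dfaEval δ q2 z ∈ F)

/-- The language `{a,b}*b` over the two-letter alphabet `Bool` (with `b = true`). -/
def LbBool : Set (List Bool) := {w | ∃ u : List Bool, w = u ++ [true]}

lemma dfaEval_append {Q A : Type} (δ : Q → A → Q) (q : Q) (u v : List A) :
    dfaEval δ q (u ++ v) = dfaEval δ (dfaEval δ q u) v := by
  simp [dfaEval, List.foldl_append]

lemma mem_Lb_iff (w : List Bool) :
    w ∈ LbBool ↔ w.getLast? = some true := by
  constructor
  · rintro ⟨u, rfl⟩; simp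
  · intro h
    have hne : w ≠ [] := by rintro rfl; simp at h
    refine ⟨w.dropLast, ?_⟩
    have := List.dropLast_append_getLast hne
    rw [List.getLast?_eq_getLast hne, Option.some_inj] at h
    rw [← h]
    exact this.symm

lemma flatMap_eval {Q A : Type} (δ : Q → A → Q) (h : Bool → List A)
    (q1 q2 : Q) (r : Bool → Q)
    (hr : ∀ c q, (q = q1 ∨ q = q2) → dfaEval δ q (h c) = r c)
    (hr1 : ∀ c, r c = q1 ∨ r c = q2) :
    ∀ (w : List Bool) q, (q = q1 ∨ q = q2) →
      dfaEval δ q (w.flatMap h) = (w.getLast?).elim q r := by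
  intro w
  induction w with
  | nil => intro q hq; simp [dfaEval]
  | cons c t ih =>
    intro q hq
    rw [List.flatMap_cons, dfaEval_append, hr c q hq]
    cases t with
    | nil => simp [dfaEval]
    | cons d t' =>
      rw [ih (r c) (hr1 c)]
      rw [List.getLast?_cons_cons]
      have : (d :: t').getLast? = some ((d::t').getLast (by simp)) :=
        List.getLast?_eq_getLast (by simp)
      rw [this]
      simp

/-- if a DFA for `L` with all states reachable (such as the minimal DFA)
violates the partial order condition — i.e. it has distinguishable states `q1 ≠ q2` and
nonempty strings `x, y` with `δ(q1,x) = δ(q2,x) = q2` and `δ(q2,y) = q1` — then,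
assuming `RMM` is closed under inverse homomorphisms and under left/right quotients
and that `{a,b}*b ∉ RMM`, the language `L` is not in `RMM`. -/
theorem violating_partial_order_not_in_RMM {A : Type}
    (RMM : (B : Type) → Set (List B) → Prop)
    (hinv : ∀ (B C : Type) (h : C → List B) (L : Set (List B)),
      RMM B L → RMM C {w | w.flatMap h ∈ L})
    (hquot : ∀ (B : Type) (L : Set (List B)) (s z : List B),
      RMM B L → RMM B {w | s ++ w ++ z ∈ L})
    (hLb : ¬ RMM Bool LbBool)
    (L : Set (List A)) (n : ℕ) (δ : Fin n → A → Fin n) (q0 : Fin n) (F : Set (Fin n))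
    (hacc : ∀ w, w ∈ L ↔ dfaEval δ q0 w ∈ F)
    (hreach : ∀ q : Fin n, ∃ s : List A, dfaEval δ q0 s = q)
    (q1 q2 : Fin n) (x y : List A)
    (hq : q1 ≠ q2) (hdist : Disting δ F q1 q2) (hx : x ≠ []) (hy : y ≠ [])
    (h1 : dfaEval δ q1 x = q2) (h2 : dfaEval δ q2 x = q2) (h3 : dfaEval δ q2 y = q1) :
    ¬ RMM A L := by
  intro hL
  obtain ⟨z, hz⟩ := hdist
  obtain ⟨s, hs⟩ := hreach q1
  -- evaluation facts for the words x and x++y from q1 or q2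
  have hxy1 : dfaEval δ q1 (x ++ y) = q1 := by rw [dfaEval_append, h1, h3]
  have hxy2 : dfaEval δ q2 (x ++ y) = q1 := by rw [dfaEval_append, h2, h3]
  rcases Classical.em (dfaEval δ q1 z ∈ F) with hz1 | hz1
  · -- then dfaEval δ q2 z ∉ F; start from q2, map true ↦ x ++ y, false ↦ x
    have hz2 : dfaEval δ q2 z ∉ F := fun h => hz ⟨fun _ => h, fun _ => hz1⟩
    set h : Bool → List A := fun c => if c then x ++ y else x with hdef
    set r : Bool → Fin n := fun c => if c then q1 else q2 with rdef
    have hr : ∀ c q, (q = q1 ∨ q = q2) → dfaEval δ q (h c) = r c := by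
      rintro c q (rfl | rfl) <;> cases c <;> simp [hdef, rdef, h1, h2, hxy1, hxy2]
    have hr1 : ∀ c, r c = q1 ∨ r c = q2 := by
      intro c; cases c <;> simp [rdef]
    have hkey := flatMap_eval δ h q1 q2 r hr hr1
    have hL1 : RMM A {w | (s ++ x) ++ w ++ z ∈ L} := hquot A L (s ++ x) z hL
    have hL2 : RMM Bool {w | w.flatMap h ∈ {w | (s ++ x) ++ w ++ z ∈ L}} :=
      hinv A Bool h _ hL1
    have hEq : {w : List Bool | w.flatMap h ∈ {w | (s ++ x) ++ w ++ z ∈ L}} = LbBool := by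
      ext w
      have hstart : dfaEval δ q0 (s ++ x) = q2 := by rw [dfaEval_append, hs, h1]
      have : ((s ++ x) ++ w.flatMap h ++ z ∈ L) ↔
          dfaEval δ ((w.getLast?).elim q2 r) z ∈ F := by
        rw [hacc, dfaEval_append, dfaEval_append, hstart, hkey w q2 (Or.inr rfl)]
      simp only [Set.mem_setOf_eq, this, mem_Lb_iff]
      rcases hlast : w.getLast? with - | c
      · simpa using hz2
      · cases c
        · simpa [rdef] using fun h => (hz2 h).elim
        · simpa [rdef] using hz1
    rw [hEq] at hL2
    exact hLb hL2
  · -- then dfaEval δ q2 z ∈ F; start from q1, map true ↦ x, false ↦ x ++ y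
    have hz2 : dfaEval δ q2 z ∈ F := by
      by_contra h2'
      exact hz ⟨fun h => (hz1 h).elim, fun h => (h2' h).elim⟩
    set h : Bool → List A := fun c => if c then x else x ++ y with hdef
    set r : Bool → Fin n := fun c => if c then q2 else q1 with rdef
    have hr : ∀ c q, (q = q1 ∨ q = q2) → dfaEval δ q (h c) = r c := by
      rintro c q (rfl | rfl) <;> cases c <;> simp [hdef, rdef, h1, h2, hxy1, hxy2]
    have hr1 : ∀ c, r c = q1 ∨ r c = q2 := by
      intro c; cases c <;> simp [rdef]
    have hkey := flatMap_eval δ h q1 q2 r hr hr1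
    have hL1 : RMM A {w | s ++ w ++ z ∈ L} := hquot A L s z hL
    have hL2 : RMM Bool {w | w.flatMap h ∈ {w | s ++ w ++ z ∈ L}} :=
      hinv A Bool h _ hL1
    have hEq : {w : List Bool | w.flatMap h ∈ {w | s ++ w ++ z ∈ L}} = LbBool := by
      ext w
      have : (s ++ w.flatMap h ++ z ∈ L) ↔
          dfaEval δ ((w.getLast?).elim q1 r) z ∈ F := by
        rw [hacc, dfaEval_append, dfaEval_append, hs, hkey w q1 (Or.inl rfl)]
      simp only [Set.mem_setOf_eq, this, mem_Lb_iff]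
      rcases hlast : w.getLast? with - | c
      · simpa using hz1
      · cases c
        · simpa [rdef] using fun h => (hz1 h).elim
        · simpa [rdef] using hz2
    rw [hEq] at hL2
    exact hLb hL2
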